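/- Let W be the subgroup of GL(F̂) generated by s_{α_0},…,s_{α_l}. (Type I) Let W_f^{(I)} be the subgroup generated by s_{α_1},…,s_{α_l} and M^{(I)} = ℤε_1 ⊕ ⋯ ⊕ ℤε_l ⊂ F. Then t(M^{(I)}) := {t_μ : μ ∈ M^{(I)}} is an abelian normal subgroup of W, and W is the internal semidirect product W = W_f^{(I)} ⋉ t(M^{(I)}): every w ∈ W can be written uniquely as w = u ∘ t_μ with u ∈ W_f^{(I)} and μ ∈ M^{(I)}. (Type II) Likewise, with W_f^{(II)} the subgroup generated by s_{α_0},…,s_{α_{l−1}} and M^{(II)} = ℤε_1^{(II)} ⊕ ⋯ ⊕ ℤε_l^{(II)} where ε_i^{(II)} = −ε_{l+1−i} + (1/2)δ, the set t(M^{(II)}) is an abelian normal subgroup of W and W = W_f^{(II)} ⋉ t(M^{(II)}). -/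

import Mathlib

open scoped BigOperators
open Finset

noncomputable section

/-- `F̂ = ℝ^l ⊕ ℝδ ⊕ ℝγ`, a vector `(x, d, g)` represents `x + d·δ + g·γ`. -/
abbrev Fhat (l : ℕ) := (Fin l → ℝ) × ℝ × ℝ

/-- The bilinear form `Î` on `F̂`. -/
def Ihat {l : ℕ} (u v : Fhat l) : ℝ :=
  (∑ i, u.1 i * v.1 i) + u.2.1 * v.2.2 + u.2.2 * v.2.1

/-- The isotropic vector `δ`. -/
def deltaV (l : ℕ) : Fhat l := (0, 1, 0)

/-- The isotropic vector `γ`. -/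
def gammaV (l : ℕ) : Fhat l := (0, 0, 1)

/-- The standard basis vector `ε_n` (1-based index `n`, for `1 ≤ n ≤ l`). -/
def eps (l : ℕ) (n : ℕ) : Fhat l := (fun j => if (j : ℕ) = n - 1 then 1 else 0, 0, 0)

/-- The translation `t_μ` associated to `μ ∈ F`. -/
def tmu {l : ℕ} (μ u : Fhat l) : Fhat l :=
  u + Ihat u (deltaV l) • μ
    - (Ihat u μ + (1/2) * Ihat μ μ * Ihat u (deltaV l)) • deltaV l

/-- The reflection `s_β` for a non-isotropic `β`. -/
def sref {l : ℕ} (β u : Fhat l) : Fhat l := u - (2 * Ihat u β / Ihat β β) • β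

/-- The simple roots `α_0 = δ − 2ε_1`, `α_i = ε_i − ε_{i+1}` (`1 ≤ i ≤ l−1`),
`α_l = ε_l` of type `BC_l^{(2)}`. -/
def simpleRoot (l : ℕ) (i : ℕ) : Fhat l :=
  if i = 0 then deltaV l - (2 : ℝ) • eps l 1
  else if i = l then eps l l
  else eps l i - eps l (i + 1)

/-- The affine Weyl group `W`, i.e. the set of all finite products of the simple
reflections `s_{α_0}, …, s_{α_l}` (these are involutions, so this set is the
subgroup they generate). -/
inductive InW (l : ℕ) : (Fhat l → Fhat l) → Prop
  | one : InW l id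
  | step (i : ℕ) (hi : i ≤ l) (w : Fhat l → Fhat l) :
      InW l w → InW l (sref (simpleRoot l i) ∘ w)

/-- The finite Weyl group `W_f^{(I)}`, generated by `s_{α_1}, …, s_{α_l}`. -/
inductive InWfI (l : ℕ) : (Fhat l → Fhat l) → Prop
  | one : InWfI l id
  | step (i : ℕ) (hi : 1 ≤ i) (hi' : i ≤ l) (w : Fhat l → Fhat l) :
      InWfI l w → InWfI l (sref (simpleRoot l i) ∘ w)

/-- The finite Weyl group `W_f^{(II)}`, generated by `s_{α_0}, …, s_{α_{l−1}}`. -/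
inductive InWfII (l : ℕ) : (Fhat l → Fhat l) → Prop
  | one : InWfII l id
  | step (i : ℕ) (hi : i < l) (w : Fhat l → Fhat l) :
      InWfII l w → InWfII l (sref (simpleRoot l i) ∘ w)

/-- The lattice `M^{(I)} = ℤε_1 ⊕ ⋯ ⊕ ℤε_l ⊂ F`. -/
def MI (l : ℕ) : Set (Fhat l) :=
  {μ | (∀ j, ∃ m : ℤ, μ.1 j = m) ∧ μ.2.1 = 0 ∧ μ.2.2 = 0}

/-- The lattice `M^{(II)} = ℤε_1^{(II)} ⊕ ⋯ ⊕ ℤε_l^{(II)}` where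
`ε_i^{(II)} = −ε_{l+1−i} + δ/2`. -/
def MII (l : ℕ) : Set (Fhat l) :=
  {μ | (∀ j, ∃ m : ℤ, μ.1 j = m) ∧ μ.2.1 = -(∑ j, μ.1 j) / 2 ∧ μ.2.2 = 0}

section Lemmas
variable {l : ℕ}

lemma Ihat_comm (u v : Fhat l) : Ihat u v = Ihat v u := by
  simp only [Ihat]; rw [Finset.sum_congr rfl (fun i _ => mul_comm (u.1 i) (v.1 i))]; ring

lemma Ihat_add_left (u v w : Fhat l) : Ihat (u + v) w = Ihat u w + Ihat v w := by
  simp only [Ihat, Prod.fst_add, Prod.snd_add, Pi.add_apply, add_mul, Finset.sum_add_distrib]; ring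

lemma Ihat_smul_left (a : ℝ) (u w : Fhat l) : Ihat (a • u) w = a * Ihat u w := by
  simp only [Ihat, Prod.smul_fst, Prod.smul_snd, Pi.smul_apply, smul_eq_mul, mul_assoc,
    ← Finset.mul_sum]; ring

lemma Ihat_neg_left (u w : Fhat l) : Ihat (-u) w = -Ihat u w := by
  have := Ihat_smul_left (-1 : ℝ) u w; simpa using this

lemma Ihat_sub_left (u v w : Fhat l) : Ihat (u - v) w = Ihat u w - Ihat v w := by
  rw [sub_eq_add_neg, Ihat_add_left, Ihat_neg_left, sub_eq_add_neg]

lemma Ihat_add_right (u v w : Fhat l) : Ihat u (v + w) = Ihat u v + Ihat u w := by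
  rw [Ihat_comm, Ihat_add_left, Ihat_comm v u, Ihat_comm w u]

lemma Ihat_smul_right (a : ℝ) (u w : Fhat l) : Ihat u (a • w) = a * Ihat u w := by
  rw [Ihat_comm, Ihat_smul_left, Ihat_comm]

lemma Ihat_neg_right (u w : Fhat l) : Ihat u (-w) = -Ihat u w := by
  rw [Ihat_comm, Ihat_neg_left, Ihat_comm]

lemma Ihat_sub_right (u v w : Fhat l) : Ihat u (v - w) = Ihat u v - Ihat u w := by
  rw [Ihat_comm, Ihat_sub_left, Ihat_comm v u, Ihat_comm w u]

lemma Ihat_delta_right (u : Fhat l) : Ihat u (deltaV l) = u.2.2 := by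
  simp [Ihat, deltaV]

lemma Ihat_delta_left (u : Fhat l) : Ihat (deltaV l) u = u.2.2 := by
  rw [Ihat_comm, Ihat_delta_right]

lemma Ihat_eps_right (k : ℕ) (h1 : 1 ≤ k) (h2 : k ≤ l) (u : Fhat l) :
    Ihat u (eps l k) = u.1 ⟨k - 1, by omega⟩ := by
  simp only [Ihat, eps, mul_zero, add_zero, mul_ite, mul_one]
  rw [show (fun x : Fin l => if (x:ℕ) = k-1 then u.1 x else 0)
      = (fun x => if x = (⟨k-1, by omega⟩:Fin l) then u.1 x else 0) from
    funext fun x => by simp [Fin.ext_iff, eq_comm]]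
  rw [Finset.sum_ite_eq' Finset.univ (⟨k - 1, by omega⟩ : Fin l) (fun j => u.1 j)]
  simp

lemma Ihat_eps_left (k : ℕ) (h1 : 1 ≤ k) (h2 : k ≤ l) (u : Fhat l) :
    Ihat (eps l k) u = u.1 ⟨k - 1, by omega⟩ := by
  rw [Ihat_comm, Ihat_eps_right k h1 h2]


lemma Fhat_ext {u v : Fhat l} (h1 : u.1 = v.1) (h2 : u.2.1 = v.2.1) (h3 : u.2.2 = v.2.2) :
    u = v := Prod.ext h1 (Prod.ext h2 h3)

lemma tmu_fst (μ u : Fhat l) : (tmu μ u).1 = u.1 + u.2.2 • μ.1 := by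
  simp only [tmu, Prod.fst_sub, Prod.fst_add, Prod.smul_fst, Ihat_delta_right]
  simp [deltaV]

lemma tmu_gamma_snd (μ u : Fhat l) : (tmu μ u).2.2 = u.2.2 + u.2.2 * μ.2.2 := by
  simp only [tmu, Prod.snd_sub, Prod.snd_add, Prod.smul_snd, Ihat_delta_right]
  simp [deltaV]

lemma tmu_snd_fst (μ u : Fhat l) :
    (tmu μ u).2.1 = u.2.1 + u.2.2 * μ.2.1 - (Ihat u μ + 1/2 * Ihat μ μ * u.2.2) := by
  simp only [tmu, Prod.snd_sub, Prod.snd_add, Prod.fst_sub, Prod.fst_add, Prod.smul_fst,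
    Prod.smul_snd, Ihat_delta_right]
  simp [deltaV]

lemma Ihat_tmu_left (ν u μ : Fhat l) :
    Ihat (tmu ν u) μ = Ihat u μ + u.2.2 * Ihat ν μ
      - (Ihat u ν + 1/2 * Ihat ν ν * u.2.2) * μ.2.2 := by
  simp only [tmu, Ihat_add_left, Ihat_sub_left, Ihat_smul_left, Ihat_delta_right,
    Ihat_delta_left]

lemma tmu_zero : tmu (0 : Fhat l) = id := by
  funext u; simp [tmu, Ihat, deltaV]

lemma tmu_congr {μ ν : Fhat l} (h1 : μ.1 = ν.1) (hμ : μ.2.2 = 0) (hν : ν.2.2 = 0) :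
    tmu μ = tmu ν := by
  funext u
  apply Fhat_ext
  · rw [tmu_fst, tmu_fst, h1]
  · rw [tmu_snd_fst, tmu_snd_fst]
    simp [Ihat, h1, hμ, hν]; ring
  · rw [tmu_gamma_snd, tmu_gamma_snd, hμ, hν]

lemma tmu_add {μ ν : Fhat l} (hμ : μ.2.2 = 0) (hν : ν.2.2 = 0) :
    tmu μ ∘ tmu ν = tmu (μ + ν) := by
  funext u
  have h3 : (tmu ν u).2.2 = u.2.2 := by rw [tmu_gamma_snd, hν]; ring
  apply Fhat_ext
  · show (tmu μ (tmu ν u)).1 = _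
    rw [tmu_fst, tmu_fst, tmu_fst, h3]
    funext j; simp [Prod.fst_add]; ring
  · show (tmu μ (tmu ν u)).2.1 = _
    rw [tmu_snd_fst, tmu_snd_fst, tmu_snd_fst, h3, Ihat_tmu_left]
    have e1 : Ihat u (μ + ν) = Ihat u μ + Ihat u ν := Ihat_add_right ..
    have e2 : Ihat (μ+ν) (μ+ν) = Ihat μ μ + 2 * Ihat ν μ + Ihat ν ν := by
      rw [Ihat_add_left, Ihat_add_right, Ihat_add_right, Ihat_comm μ ν]; ring
    rw [e1, e2]
    simp only [Prod.snd_add, Prod.fst_add, hμ, hν]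
    ring
  · show (tmu μ (tmu ν u)).2.2 = _
    rw [tmu_gamma_snd, tmu_gamma_snd, tmu_gamma_snd, hμ, hν]
    simp only [Prod.snd_add, hμ, hν]
    ring

/-- Linear isometries fixing `δ`. -/
def GoodW (l : ℕ) (w : Fhat l → Fhat l) : Prop :=
  (∀ u v, w (u + v) = w u + w v) ∧ (∀ (a : ℝ) u, w (a • u) = a • w u) ∧
  (∀ u v, Ihat (w u) (w v) = Ihat u v) ∧ w (deltaV l) = deltaV l

lemma GoodW.sub {w : Fhat l → Fhat l} (hw : GoodW l w) (u v : Fhat l) :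
    w (u - v) = w u - w v := by
  have h := hw.1 (u - v) v
  rw [sub_add_cancel] at h
  rw [h]; abel

lemma GoodW.id : GoodW l id := by
  refine ⟨fun _ _ => rfl, fun _ _ => rfl, fun _ _ => rfl, rfl⟩

lemma GoodW.comp {w w' : Fhat l → Fhat l} (hw : GoodW l w) (hw' : GoodW l w') :
    GoodW l (w ∘ w') := by
  refine ⟨fun u v => by simp [Function.comp, hw'.1, hw.1],
    fun a u => by simp [Function.comp, hw'.2.1, hw.2.1],
    fun u v => by simp [Function.comp, hw.2.2.1, hw'.2.2.1],
    by simp [Function.comp, hw'.2.2.2, hw.2.2.2]⟩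

lemma sref_add (β u v : Fhat l) : sref β (u + v) = sref β u + sref β v := by
  simp only [sref, Ihat_add_left, mul_add, add_div, add_smul]
  abel

lemma sref_smul (β : Fhat l) (a : ℝ) (u : Fhat l) : sref β (a • u) = a • sref β u := by
  simp only [sref, Ihat_smul_left, smul_sub, smul_smul]
  ring_nf

lemma sref_isom {β : Fhat l} (hβ : Ihat β β ≠ 0) (u v : Fhat l) :
    Ihat (sref β u) (sref β v) = Ihat u v := by
  simp only [sref, Ihat_sub_left, Ihat_sub_right, Ihat_smul_left, Ihat_smul_right]
  field_simp
  ring_nf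
  rw [Ihat_comm v β, Ihat_comm u β]
  ring

lemma sref_delta {β : Fhat l} (hβ2 : β.2.2 = 0) : sref β (deltaV l) = deltaV l := by
  have : Ihat (deltaV l) β = 0 := by rw [Ihat_delta_left, hβ2]
  simp [sref, this]

lemma GoodW.ofSref {β : Fhat l} (hβ : Ihat β β ≠ 0) (hβ2 : β.2.2 = 0) :
    GoodW l (sref β) :=
  ⟨sref_add β, sref_smul β, sref_isom hβ, sref_delta hβ2⟩

lemma sref_self {β : Fhat l} (hβ : Ihat β β ≠ 0) : sref β β = -β := by
  rw [sref, mul_div_assoc, div_self hβ, mul_one, two_smul]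
  abel

lemma sref_sref {β : Fhat l} (hβ : Ihat β β ≠ 0) (u : Fhat l) :
    sref β (sref β u) = u := by
  have h : Ihat (sref β u) β = -Ihat u β := by
    simp only [sref, Ihat_sub_left, Ihat_smul_left]
    field_simp
    ring
  rw [sref, h]
  simp only [sref]
  rw [show (2 * -Ihat u β / Ihat β β) = -(2 * Ihat u β / Ihat β β) by ring, neg_smul]
  abel

lemma sref_invol {β : Fhat l} (hβ : Ihat β β ≠ 0) : sref β ∘ sref β = id :=
  funext fun u => sref_sref hβ u

lemma GoodW.tmu_conj {w : Fhat l → Fhat l} (hw : GoodW l w) (μ : Fhat l) :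
    w ∘ tmu μ = tmu (w μ) ∘ w := by
  funext u
  show w (tmu μ u) = tmu (w μ) (w u)
  rw [tmu, tmu, hw.sub, hw.1, hw.2.1, hw.2.1, hw.2.2.2]
  rw [show Ihat (w u) (deltaV l) = Ihat u (deltaV l) by
    conv_lhs => rw [← hw.2.2.2]
    exact hw.2.2.1 u (deltaV l)]
  rw [hw.2.2.1 u μ, hw.2.2.1 μ μ]

lemma GoodW.sref_conj {w : Fhat l → Fhat l} (hw : GoodW l w) (β : Fhat l) :
    w ∘ _root_.sref β = _root_.sref (w β) ∘ w := by
  funext u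
  show w (_root_.sref β u) = _root_.sref (w β) (w u)
  rw [_root_.sref, _root_.sref, hw.sub, hw.2.1, hw.2.2.1 u β, hw.2.2.1 β β]

lemma Ihat_eps_eps {k m : ℕ} (hk1 : 1 ≤ k) (hk : k ≤ l) (hm1 : 1 ≤ m) (hm : m ≤ l) :
    Ihat (eps l k) (eps l m) = if k = m then 1 else 0 := by
  rw [Ihat_eps_right m hm1 hm]
  show (if ((⟨m-1, by omega⟩ : Fin l) : ℕ) = k - 1 then (1:ℝ) else 0) = _
  by_cases h : k = m
  · rw [if_pos (by simp [h]), if_pos h]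
  · rw [if_neg (by simp; omega), if_neg h]

lemma Ihat_delta_delta : Ihat (deltaV l) (deltaV l) = 0 := by
  rw [Ihat_delta_right]; rfl

lemma Ihat_eps_delta {k : ℕ} : Ihat (eps l k) (deltaV l) = 0 := by
  rw [Ihat_delta_right]; rfl

lemma Ihat_delta_eps {k : ℕ} : Ihat (deltaV l) (eps l k) = 0 := by
  rw [Ihat_delta_left]; rfl

lemma norm_dme {k : ℕ} (h1 : 1 ≤ k) (h2 : k ≤ l) :
    Ihat (deltaV l - (2:ℝ) • eps l k) (deltaV l - (2:ℝ) • eps l k) = 4 := by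
  rw [Ihat_sub_left, Ihat_sub_right, Ihat_sub_right, Ihat_smul_left, Ihat_smul_left,
    Ihat_smul_right, Ihat_smul_right, Ihat_delta_delta, Ihat_eps_delta, Ihat_delta_eps,
    Ihat_eps_eps h1 h2 h1 h2, if_pos rfl]
  ring

lemma norm_mid {k : ℕ} (h1 : 1 ≤ k) (h2 : k + 1 ≤ l) :
    Ihat (eps l k - eps l (k+1)) (eps l k - eps l (k+1)) = 2 := by
  rw [Ihat_sub_left, Ihat_sub_right, Ihat_sub_right,
    Ihat_eps_eps h1 (by omega) h1 (by omega),
    Ihat_eps_eps h1 (by omega) (by omega) h2,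
    Ihat_eps_eps (by omega) h2 h1 (by omega),
    Ihat_eps_eps (by omega) h2 (by omega) h2,
    if_pos rfl, if_pos rfl, if_neg (by omega), if_neg (by omega)]
  ring

lemma norm_eps {k : ℕ} (h1 : 1 ≤ k) (h2 : k ≤ l) :
    Ihat (eps l k) (eps l k) = 1 := by
  rw [Ihat_eps_eps h1 h2 h1 h2, if_pos rfl]

lemma simpleRoot_zero : simpleRoot l 0 = deltaV l - (2:ℝ) • eps l 1 := if_pos rfl

lemma simpleRoot_mid {i : ℕ} (h1 : 1 ≤ i) (h2 : i < l) :
    simpleRoot l i = eps l i - eps l (i+1) := by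
  rw [simpleRoot, if_neg (by omega), if_neg (by omega)]

lemma simpleRoot_last (hl : 1 ≤ l) : simpleRoot l l = eps l l := by
  rw [simpleRoot, if_neg (by omega), if_pos rfl]

-- sref values
lemma sref_mid_eps {k : ℕ} (h1 : 1 ≤ k) (h2 : k + 1 ≤ l) :
    sref (eps l k - eps l (k+1)) (eps l (k+1)) = eps l k := by
  rw [sref, norm_mid h1 h2, Ihat_sub_right,
    Ihat_eps_eps (by omega) h2 h1 (by omega), Ihat_eps_eps (by omega) h2 (by omega) h2,
    if_pos rfl, if_neg (by omega)]
  norm_num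

lemma sref_mid_dme {k : ℕ} (h1 : 1 ≤ k) (h2 : k + 1 ≤ l) :
    sref (eps l k - eps l (k+1)) (deltaV l - (2:ℝ) • eps l k)
      = deltaV l - (2:ℝ) • eps l (k+1) := by
  rw [sref, norm_mid h1 h2, Ihat_sub_left, Ihat_sub_right, Ihat_sub_right, Ihat_smul_left,
    Ihat_smul_left, Ihat_delta_eps, Ihat_delta_eps,
    Ihat_eps_eps h1 (by omega) h1 (by omega), Ihat_eps_eps h1 (by omega) (by omega) h2,
    if_pos rfl, if_neg (by omega)]
  norm_num
  module

lemma sref_eps_self {k : ℕ} (h1 : 1 ≤ k) (h2 : k ≤ l) :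
    sref (eps l k) (eps l k) = -eps l k :=
  sref_self (by rw [norm_eps h1 h2]; norm_num)

lemma sref_dme_negeps {k : ℕ} (h1 : 1 ≤ k) (h2 : k ≤ l) :
    sref (deltaV l - (2:ℝ) • eps l k) (-eps l k) = eps l k - deltaV l := by
  rw [sref, norm_dme h1 h2, Ihat_neg_left, Ihat_sub_right, Ihat_eps_delta, Ihat_smul_right,
    norm_eps h1 h2]
  norm_num
  module

-- exact formulas for the reflections applied to a general vector
lemma sref_dme_apply {k : ℕ} (h1 : 1 ≤ k) (h2 : k ≤ l) {μ : Fhat l} (hγ : μ.2.2 = 0) :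
    sref (deltaV l - (2:ℝ) • eps l k) μ
      = μ + (μ.1 ⟨k-1, by omega⟩) • (deltaV l - (2:ℝ) • eps l k) := by
  rw [sref, norm_dme h1 h2, Ihat_sub_right, Ihat_delta_right, Ihat_smul_right,
    Ihat_eps_right k h1 h2, hγ]
  rw [show 2 * (0 - 2 * μ.1 ⟨k-1, by omega⟩) / 4 = -(μ.1 ⟨k-1, by omega⟩) by ring]
  module

lemma sref_mid_apply {k : ℕ} (h1 : 1 ≤ k) (h2 : k + 1 ≤ l) (μ : Fhat l) :
    sref (eps l k - eps l (k+1)) μ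
      = μ - (μ.1 ⟨k-1, by omega⟩ - μ.1 ⟨k, by omega⟩) • (eps l k - eps l (k+1)) := by
  rw [sref, norm_mid h1 h2, Ihat_sub_right, Ihat_eps_right k h1 (by omega),
    Ihat_eps_right (k+1) (by omega) h2]
  rw [show ((⟨k+1-1, by omega⟩ : Fin l) : Fin l) = ⟨k, by omega⟩ by simp]
  rw [show 2 * (μ.1 ⟨k-1, by omega⟩ - μ.1 ⟨k, by omega⟩) / 2
      = μ.1 ⟨k-1, by omega⟩ - μ.1 ⟨k, by omega⟩ by ring]

lemma sref_eps_apply {k : ℕ} (h1 : 1 ≤ k) (h2 : k ≤ l) (μ : Fhat l) :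
    sref (eps l k) μ = μ - (2 * μ.1 ⟨k-1, by omega⟩) • eps l k := by
  rw [sref, norm_eps h1 h2, Ihat_eps_right k h1 h2, div_one]

-- components
lemma eps_fst (k : ℕ) (j : Fin l) : (eps l k).1 j = if (j:ℕ) = k - 1 then 1 else 0 := rfl
lemma eps_snd_fst (k : ℕ) : (eps l k).2.1 = 0 := rfl
lemma eps_snd_snd (k : ℕ) : (eps l k).2.2 = 0 := rfl
lemma deltaV_fst (j : Fin l) : (deltaV l).1 j = 0 := rfl
lemma deltaV_snd_fst : (deltaV l).2.1 = 1 := rfl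
lemma deltaV_snd_snd : (deltaV l).2.2 = 0 := rfl

lemma simpleRoot_snd_snd (i : ℕ) : (simpleRoot l i).2.2 = 0 := by
  rw [simpleRoot]
  split_ifs <;> simp [deltaV, eps]

lemma simpleRoot_norm_ne (hl : 1 ≤ l) {i : ℕ} (hi : i ≤ l) :
    Ihat (simpleRoot l i) (simpleRoot l i) ≠ 0 := by
  rcases Nat.eq_zero_or_pos i with rfl | h1
  · rw [simpleRoot_zero, norm_dme (by omega) hl]; norm_num
  rcases eq_or_lt_of_le hi with rfl | h2
  · rw [simpleRoot_last hl, norm_eps h1 hi]; norm_num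
  · rw [simpleRoot_mid h1 h2, norm_mid h1 h2]; norm_num

lemma GoodW.simpleRoot (hl : 1 ≤ l) {i : ℕ} (hi : i ≤ l) :
    GoodW l (sref (_root_.simpleRoot l i)) :=
  GoodW.ofSref (simpleRoot_norm_ne hl hi) (simpleRoot_snd_snd i)

lemma simpleRoot_invol (hl : 1 ≤ l) {i : ℕ} (hi : i ≤ l) :
    sref (simpleRoot l i) ∘ sref (simpleRoot l i) = id :=
  sref_invol (simpleRoot_norm_ne hl hi)

-- group closure lemmas
lemma InW_comp {w w' : Fhat l → Fhat l} (h : InW l w) (h' : InW l w') : InW l (w ∘ w') := by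
  induction h with
  | one => simpa using h'
  | step i hi w hw ih => rw [Function.comp_assoc]; exact .step i hi _ ih

lemma InWfI_comp {w w' : Fhat l → Fhat l} (h : InWfI l w) (h' : InWfI l w') :
    InWfI l (w ∘ w') := by
  induction h with
  | one => simpa using h'
  | step i hi hi' w hw ih => rw [Function.comp_assoc]; exact .step i hi hi' _ ih

lemma InWfII_comp {w w' : Fhat l → Fhat l} (h : InWfII l w) (h' : InWfII l w') :
    InWfII l (w ∘ w') := by
  induction h with
  | one => simpa using h'
  | step i hi w hw ih => rw [Function.comp_assoc]; exact .step i hi _ ih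

lemma InWfI_toW {w : Fhat l → Fhat l} (h : InWfI l w) : InW l w := by
  induction h with
  | one => exact .one
  | step i hi hi' w hw ih => exact .step i hi' _ ih

lemma InWfII_toW {w : Fhat l → Fhat l} (h : InWfII l w) : InW l w := by
  induction h with
  | one => exact .one
  | step i hi w hw ih => exact .step i (by omega) _ ih

lemma InWfI_gen {i : ℕ} (h1 : 1 ≤ i) (h2 : i ≤ l) : InWfI l (sref (simpleRoot l i)) := by
  simpa using InWfI.step i h1 h2 id .one

lemma InWfII_gen {i : ℕ} (h : i < l) : InWfII l (sref (simpleRoot l i)) := by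
  simpa using InWfII.step i h id .one

lemma chainI (hl : 1 ≤ l) :
    ∀ (m k : ℕ), 1 ≤ k → k ≤ l → l - k ≤ m → InWfI l (sref (eps l k)) := by
  intro m
  induction m with
  | zero =>
    intro k h1 h2 hm
    have hkl : k = l := by omega
    subst hkl
    rw [← simpleRoot_last hl]
    exact InWfI_gen h1 h2
  | succ m ih =>
    intro k h1 h2 hm
    rcases eq_or_lt_of_le h2 with rfl | hlt
    · rw [← simpleRoot_last hl]; exact InWfI_gen h1 h2
    · have hk1 : InWfI l (sref (eps l (k+1))) := ih (k+1) (by omega) hlt (by omega)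
      have hg : InWfI l (sref (simpleRoot l k)) := InWfI_gen h1 (by omega)
      have hgood : GoodW l (sref (simpleRoot l k)) := GoodW.simpleRoot hl (by omega)
      have hconj := hgood.sref_conj (eps l (k+1))
      rw [simpleRoot_mid h1 hlt, sref_mid_eps h1 hlt, ← simpleRoot_mid h1 hlt] at hconj
      have : sref (eps l k)
          = (sref (simpleRoot l k) ∘ sref (eps l (k+1))) ∘ sref (simpleRoot l k) := by
        rw [hconj, Function.comp_assoc, simpleRoot_invol hl (by omega), Function.comp_id]
      rw [this]
      exact InWfI_comp (InWfI_comp hg hk1) hg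

lemma chainI' (hl : 1 ≤ l) {k : ℕ} (h1 : 1 ≤ k) (h2 : k ≤ l) : InWfI l (sref (eps l k)) :=
  chainI hl (l - k) k h1 h2 le_rfl

lemma chainII (hl : 1 ≤ l) :
    ∀ (k : ℕ), 1 ≤ k → k ≤ l → InWfII l (sref (deltaV l - (2:ℝ) • eps l k)) := by
  intro k
  induction k with
  | zero => omega
  | succ k ih =>
    intro h1 h2
    rcases Nat.eq_zero_or_pos k with rfl | hk1
    · rw [← simpleRoot_zero]; exact InWfII_gen (by omega)
    · have hk : InWfII l (sref (deltaV l - (2:ℝ) • eps l k)) := ih hk1 (by omega)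
      have hg : InWfII l (sref (simpleRoot l k)) := InWfII_gen (by omega)
      have hgood : GoodW l (sref (simpleRoot l k)) := GoodW.simpleRoot hl (by omega)
      have hconj := hgood.sref_conj (deltaV l - (2:ℝ) • eps l k)
      rw [simpleRoot_mid hk1 (by omega), sref_mid_dme hk1 (by omega),
        ← simpleRoot_mid hk1 (by omega)] at hconj
      have : sref (deltaV l - (2:ℝ) • eps l (k+1))
          = (sref (simpleRoot l k) ∘ sref (deltaV l - (2:ℝ) • eps l k))
            ∘ sref (simpleRoot l k) := by
        rw [hconj, Function.comp_assoc, simpleRoot_invol hl (by omega), Function.comp_id]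
      rw [this]
      exact InWfII_comp (InWfII_comp hg hk) hg

lemma key_id {k : ℕ} (h1 : 1 ≤ k) (h2 : k ≤ l) :
    sref (deltaV l - (2:ℝ) • eps l k) = tmu (eps l k) ∘ sref (eps l k) := by
  funext u
  show _ = tmu (eps l k) (sref (eps l k) u)
  rw [sref_eps_apply h1 h2, sref, norm_dme h1 h2, tmu]
  simp only [Ihat_sub_left, Ihat_sub_right, Ihat_smul_left, Ihat_smul_right,
    Ihat_delta_right, Ihat_delta_left, Ihat_delta_delta, Ihat_eps_delta, Ihat_delta_eps,
    Ihat_eps_right k h1 h2, norm_eps h1 h2, eps_snd_snd]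
  rw [show (eps l k).1 ⟨k-1, by omega⟩ = 1 by rw [eps_fst, if_pos rfl]]
  simp only [Prod.fst_sub, Prod.snd_sub, Prod.smul_fst, Prod.smul_snd, Pi.sub_apply,
    Pi.smul_apply, smul_eq_mul, eps_snd_snd,
    show (eps l k).1 ⟨k-1, by omega⟩ = 1 by rw [eps_fst, if_pos rfl]]
  match_scalars <;> ring

lemma eps_norm_ne {k : ℕ} (h1 : 1 ≤ k) (h2 : k ≤ l) : Ihat (eps l k) (eps l k) ≠ 0 := by
  rw [norm_eps h1 h2]; norm_num

lemma dme_norm_ne {k : ℕ} (h1 : 1 ≤ k) (h2 : k ≤ l) :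
    Ihat (deltaV l - (2:ℝ) • eps l k) (deltaV l - (2:ℝ) • eps l k) ≠ 0 := by
  rw [norm_dme h1 h2]; norm_num

lemma tmu_eps_eq {k : ℕ} (h1 : 1 ≤ k) (h2 : k ≤ l) :
    tmu (eps l k) = sref (deltaV l - (2:ℝ) • eps l k) ∘ sref (eps l k) := by
  rw [key_id h1 h2, Function.comp_assoc, sref_invol (eps_norm_ne h1 h2), Function.comp_id]

lemma tmu_neg_eps_eq {k : ℕ} (h1 : 1 ≤ k) (h2 : k ≤ l) :
    tmu (-eps l k) = sref (eps l k) ∘ sref (deltaV l - (2:ℝ) • eps l k) := by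
  have hinv : tmu (-eps l k) ∘ tmu (eps l k) = id := by
    rw [tmu_add (by simp [eps_snd_snd]) (eps_snd_snd k), neg_add_cancel, tmu_zero]
  funext u
  have h4 : tmu (eps l k)
      (sref (eps l k) (sref (deltaV l - (2:ℝ) • eps l k) u)) = u := by
    rw [tmu_eps_eq h1 h2]
    show sref (deltaV l - (2:ℝ) • eps l k)
      (sref (eps l k) (sref (eps l k) (sref (deltaV l - (2:ℝ) • eps l k) u))) = u
    rw [sref_sref (eps_norm_ne h1 h2), sref_sref (dme_norm_ne h1 h2)]
  show tmu (-eps l k) u = sref (eps l k) (sref (deltaV l - (2:ℝ) • eps l k) u)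
  conv_lhs => rw [← h4]
  simpa using congrFun hinv (sref (eps l k) (sref (deltaV l - (2:ℝ) • eps l k) u))

lemma InW_tmu_eps (hl : 1 ≤ l) {k : ℕ} (h1 : 1 ≤ k) (h2 : k ≤ l) :
    InW l (tmu (eps l k)) := by
  rw [tmu_eps_eq h1 h2]
  exact InW_comp (InWfII_toW (chainII hl k h1 h2)) (InWfI_toW (chainI' hl h1 h2))

lemma InW_tmu_neg_eps (hl : 1 ≤ l) {k : ℕ} (h1 : 1 ≤ k) (h2 : k ≤ l) :
    InW l (tmu (-eps l k)) := by
  rw [tmu_neg_eps_eq h1 h2]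
  exact InW_comp (InWfI_toW (chainI' hl h1 h2)) (InWfII_toW (chainII hl k h1 h2))

lemma InW_tmu_smul_eps (hl : 1 ≤ l) {k : ℕ} (h1 : 1 ≤ k) (h2 : k ≤ l) (m : ℤ) :
    InW l (tmu ((m:ℝ) • eps l k)) := by
  induction m using Int.induction_on with
  | zero => rw [show ((0:ℤ):ℝ) = 0 by norm_num, zero_smul, tmu_zero]; exact .one
  | succ n ihn =>
    have : ((n+1:ℤ):ℝ) • eps l k = (n:ℝ) • eps l k + eps l k := by
      push_cast; rw [add_smul, one_smul]
    rw [this, ← tmu_add (by simp [eps_snd_snd]) (eps_snd_snd k)]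
    exact InW_comp ihn (InW_tmu_eps hl h1 h2)
  | pred n ihn =>
    have : ((-n-1:ℤ):ℝ) • eps l k = ((-n:ℤ):ℝ) • eps l k + (-eps l k) := by
      push_cast; module
    rw [this, ← tmu_add (by simp [eps_snd_snd]) (by simp [eps_snd_snd])]
    exact InW_comp ihn (InW_tmu_neg_eps hl h1 h2)

lemma sum_eps {k : ℕ} (h1 : 1 ≤ k) (h2 : k ≤ l) :
    ∑ j, (eps l k).1 j = 1 := by
  have := Ihat_eps_right k h1 h2 ((fun _ => (1:ℝ)), 0, 0)
  simpa [Ihat, one_mul] using this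

lemma InW_tmu_MI_aux (hl : 1 ≤ l) (s : Finset (Fin l)) :
    ∀ μ : Fhat l, (∀ j, ∃ m : ℤ, μ.1 j = m) → μ.2.1 = 0 → μ.2.2 = 0 →
      (∀ j ∉ s, μ.1 j = 0) → InW l (tmu μ) := by
  induction s using Finset.induction with
  | empty =>
    intro μ hx h21 h22 hs
    have : μ = 0 := by
      apply Fhat_ext
      · funext j; exact hs j (Finset.notMem_empty j)
      · exact h21
      · exact h22
    rw [this, tmu_zero]; exact .one
  | @insert a s ha ih =>
    intro μ hx h21 h22 hs
    obtain ⟨m, hm⟩ := hx a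
    set μ' : Fhat l := (Function.update μ.1 a 0, 0, 0) with hμ'
    have hdecomp : μ = (m:ℝ) • eps l ((a:ℕ)+1) + μ' := by
      apply Fhat_ext
      · funext j
        simp only [Prod.fst_add, Prod.smul_fst, Pi.add_apply, Pi.smul_apply, smul_eq_mul,
          hμ', eps_fst, Nat.add_sub_cancel]
        by_cases hj : j = a
        · subst hj; rw [if_pos rfl, Function.update_self, hm]; ring
        · rw [if_neg (by simpa [Fin.ext_iff] using hj), Function.update_of_ne hj]; ring
      · simp [hμ', h21, eps_snd_fst]
      · simp [hμ', h22, eps_snd_snd]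
    have hμ'x : ∀ j, ∃ n : ℤ, μ'.1 j = n := by
      intro j
      by_cases hj : j = a
      · subst hj; exact ⟨0, by simp [hμ']⟩
      · obtain ⟨n, hn⟩ := hx j; exact ⟨n, by simp [hμ', Function.update_of_ne hj, hn]⟩
    have hμ's : ∀ j ∉ s, μ'.1 j = 0 := by
      intro j hj
      by_cases hja : j = a
      · subst hja; simp [hμ']
      · have : j ∉ insert a s := by simp [hja, hj]
        simp [hμ', Function.update_of_ne hja, hs j this]
    have hInt : InW l (tmu μ') := ih μ' hμ'x rfl rfl hμ's
    rw [hdecomp, ← tmu_add (by simp [eps_snd_snd]) (by simp [hμ'])]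
    exact InW_comp (InW_tmu_smul_eps hl (by omega) (by omega) m) hInt

lemma InW_tmu_MI (hl : 1 ≤ l) {μ : Fhat l} (hμ : μ ∈ MI l) : InW l (tmu μ) := by
  obtain ⟨hx, h21, h22⟩ := hμ
  exact InW_tmu_MI_aux hl Finset.univ μ hx h21 h22 (fun j hj => absurd (Finset.mem_univ j) hj)

lemma InW_tmu_MII (hl : 1 ≤ l) {μ : Fhat l} (hμ : μ ∈ MII l) : InW l (tmu μ) := by
  obtain ⟨hx, h21, h22⟩ := hμ
  have : tmu μ = tmu ((μ.1, 0, 0) : Fhat l) := tmu_congr rfl h22 rfl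
  rw [this]
  exact InW_tmu_MI hl ⟨hx, rfl, rfl⟩

/-- signed permutation maps -/
def SPm (l : ℕ) (w : Fhat l → Fhat l) : Prop :=
  ∃ σ : Equiv.Perm (Fin l), ∃ e : Fin l → ℝ, (∀ i, e i * e i = 1) ∧
    ∀ u : Fhat l, w u = (fun i => e i * u.1 (σ i), u.2.1, u.2.2)

lemma SPm.id : SPm l (id : Fhat l → Fhat l) :=
  ⟨Equiv.refl _, fun _ => 1, fun _ => by norm_num, fun u => by simp⟩

lemma SPm.comp {w w' : Fhat l → Fhat l} (h : SPm l w) (h' : SPm l w') : SPm l (w ∘ w') := by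
  obtain ⟨σ, e, he, hw⟩ := h
  obtain ⟨σ', e', he', hw'⟩ := h'
  refine ⟨σ.trans σ', fun i => e i * e' (σ i), fun i => ?_, fun u => ?_⟩
  · show (e i * e' (σ i)) * (e i * e' (σ i)) = 1
    have h1 := he i; have h2 := he' (σ i); nlinarith
  · show w (w' u) = _
    rw [hw' u, hw]
    apply Fhat_ext
    · funext i
      show e i * (e' (σ i) * u.1 (σ' (σ i))) = (e i * e' (σ i)) * u.1 (σ.trans σ' i)
      rw [Equiv.trans_apply]; ring
    · rfl
    · rfl

lemma SPm.inv {w : Fhat l → Fhat l} (h : SPm l w) :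
    ∃ w' : Fhat l → Fhat l, SPm l w' ∧ w' ∘ w = _root_.id ∧ w ∘ w' = _root_.id := by
  obtain ⟨σ, e, he, hw⟩ := h
  have hsq : ∀ (i : Fin l) (x : ℝ), e i * (e i * x) = x := by
    intro i x; rw [← mul_assoc, he i, one_mul]
  refine ⟨fun u => (fun i => e (σ.symm i) * u.1 (σ.symm i), u.2.1, u.2.2),
    ⟨σ.symm, fun i => e (σ.symm i), fun i => he _, fun u => rfl⟩, ?_, ?_⟩
  · funext u
    show (fun i => e (σ.symm i) * (w u).1 (σ.symm i), (w u).2.1, (w u).2.2) = u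
    rw [hw u]
    refine Fhat_ext (funext fun i => ?_) rfl rfl
    show e (σ.symm i) * (e (σ.symm i) * u.1 (σ (σ.symm i))) = u.1 i
    rw [Equiv.apply_symm_apply]
    exact hsq _ _
  · funext u
    show w (fun i => e (σ.symm i) * u.1 (σ.symm i), u.2.1, u.2.2) = u
    rw [hw]
    refine Fhat_ext (funext fun i => ?_) rfl rfl
    show e i * (e (σ.symm (σ i)) * u.1 (σ.symm (σ i))) = u.1 i
    rw [Equiv.symm_apply_apply]
    exact hsq _ _

lemma SPm_sref_eps {k : ℕ} (h1 : 1 ≤ k) (h2 : k ≤ l) : SPm l (sref (eps l k)) := by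
  refine ⟨Equiv.refl _, fun j => if (j:ℕ) = k - 1 then -1 else 1,
    fun j => by by_cases hj : (j:ℕ) = k - 1 <;> simp [hj], fun u => ?_⟩
  rw [sref_eps_apply h1 h2]
  refine Fhat_ext (funext fun j => ?_) (by simp [eps_snd_fst]) (by simp [eps_snd_snd])
  show u.1 j - 2 * u.1 ⟨k-1, by omega⟩ * (eps l k).1 j
      = (if (j:ℕ) = k - 1 then -1 else 1) * u.1 (Equiv.refl _ j)
  rw [eps_fst]
  by_cases hj : (j:ℕ) = k - 1
  · rw [if_pos hj, if_pos hj]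
    have : j = (⟨k-1, by omega⟩ : Fin l) := Fin.ext hj
    rw [this]; simp; ring
  · rw [if_neg hj, if_neg hj]; simp

lemma SPm_sref_mid {k : ℕ} (h1 : 1 ≤ k) (h2 : k + 1 ≤ l) :
    SPm l (sref (eps l k - eps l (k+1))) := by
  set K : Fin l := ⟨k-1, by omega⟩
  set K' : Fin l := ⟨k, by omega⟩
  have hKK' : K ≠ K' := by simp [K, K', Fin.ext_iff]; omega
  refine ⟨Equiv.swap K K', fun _ => 1, fun _ => by norm_num, fun u => ?_⟩
  rw [sref_mid_apply h1 h2]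
  refine Fhat_ext (funext fun j => ?_) ?_ ?_
  · show u.1 j - (u.1 K - u.1 K') * ((eps l k).1 j - (eps l (k+1)).1 j)
        = 1 * u.1 (Equiv.swap K K' j)
    rw [eps_fst, eps_fst, Nat.add_sub_cancel]
    rcases eq_or_ne j K with rfl | hjK
    · rw [if_pos rfl, if_neg (by simp [K, K', Fin.ext_iff]; omega), Equiv.swap_apply_left]
      ring
    · rcases eq_or_ne j K' with rfl | hjK'
      · rw [if_neg (by simp [K, K', Fin.ext_iff]; omega), if_pos rfl,
          Equiv.swap_apply_right]
        ring
      · rw [if_neg (by simpa [K, Fin.ext_iff] using hjK),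
          if_neg (by simpa [K', Fin.ext_iff] using hjK'),
          Equiv.swap_apply_of_ne_of_ne hjK hjK']
        ring
  · simp [eps_snd_fst]
  · simp [eps_snd_snd]

lemma SPm_of_InWfI {w : Fhat l → Fhat l} (h : InWfI l w) : SPm l w := by
  induction h with
  | one => exact SPm.id
  | step i hi hi' w hw ih =>
    refine SPm.comp ?_ ih
    rcases eq_or_lt_of_le hi' with rfl | hlt
    · rw [simpleRoot_last (by omega)]; exact SPm_sref_eps hi hi'
    · rw [simpleRoot_mid hi hlt]; exact SPm_sref_mid hi hlt

/-- the vector ρ = (1/2, …, 1/2) -/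
def rhoV (l : ℕ) : Fhat l := (fun _ => 1/2, 0, 0)

lemma rho_snd_snd : (rhoV l).2.2 = 0 := rfl

lemma neg_rho_snd : (-rhoV l).2.2 = 0 := by simp [rhoV]

lemma tmu_rho_cancel : tmu (rhoV l) ∘ tmu (-rhoV l) = id := by
  rw [tmu_add rfl neg_rho_snd, add_neg_cancel, tmu_zero]

lemma tmu_rho_cancel' : tmu (-rhoV l) ∘ tmu (rhoV l) = id := by
  rw [tmu_add neg_rho_snd rfl, neg_add_cancel, tmu_zero]

/-- affine maps in `W_f^{(II)}` -/
def APm (l : ℕ) (w : Fhat l → Fhat l) : Prop :=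
  ∃ v : Fhat l → Fhat l, SPm l v ∧ w = tmu (rhoV l) ∘ v ∘ tmu (-rhoV l)

lemma APm.id : APm l (_root_.id : Fhat l → Fhat l) := by
  refine ⟨_root_.id, SPm.id, ?_⟩
  rw [Function.id_comp, tmu_rho_cancel]

lemma APm.comp {w w' : Fhat l → Fhat l} (h : APm l w) (h' : APm l w') : APm l (w ∘ w') := by
  obtain ⟨v, hv, rfl⟩ := h
  obtain ⟨v', hv', rfl⟩ := h'
  refine ⟨v ∘ v', SPm.comp hv hv', ?_⟩
  funext u
  simp only [Function.comp_apply]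
  rw [show tmu (-rhoV l) (tmu (rhoV l) (v' (tmu (-rhoV l) u)))
      = v' (tmu (-rhoV l) u) from congrFun tmu_rho_cancel' _]

lemma APm_sref_zero (hl : 1 ≤ l) : APm l (sref (simpleRoot l 0)) := by
  refine ⟨sref (eps l 1), SPm_sref_eps le_rfl hl, ?_⟩
  have hgood : GoodW l (sref (eps l 1)) := GoodW.ofSref (eps_norm_ne le_rfl hl) rfl
  have hconj := hgood.tmu_conj (-rhoV l)
  have hval : sref (eps l 1) (-rhoV l) = -rhoV l + eps l 1 := by
    rw [sref_eps_apply le_rfl hl]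
    rw [show (-rhoV l).1 ⟨1-1, by omega⟩ = -(1/2) by simp [rhoV]]
    module
  rw [hval] at hconj
  rw [simpleRoot_zero, key_id le_rfl hl, hconj, ← Function.comp_assoc,
    tmu_add rfl (by simp [rhoV, eps_snd_snd] :
      ((-rhoV l + eps l 1 : Fhat l)).2.2 = 0),
    show rhoV l + (-rhoV l + eps l 1) = eps l 1 by module]

lemma APm_sref_mid {k : ℕ} (h1 : 1 ≤ k) (h2 : k + 1 ≤ l) :
    APm l (sref (eps l k - eps l (k+1))) := by
  refine ⟨sref (eps l k - eps l (k+1)), SPm_sref_mid h1 h2, ?_⟩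
  have hgood : GoodW l (sref (eps l k - eps l (k+1))) :=
    GoodW.ofSref (by rw [norm_mid h1 h2]; norm_num) (by simp [eps_snd_snd])
  have hval : sref (eps l k - eps l (k+1)) (-rhoV l) = -rhoV l := by
    rw [sref_mid_apply h1 h2]
    rw [show (-rhoV l).1 ⟨k-1, by omega⟩ = -(1/2) from rfl,
      show (-rhoV l).1 ⟨k, by omega⟩ = -(1/2) from rfl]
    norm_num
  have hconj := hgood.tmu_conj (-rhoV l)
  rw [hval] at hconj
  rw [hconj, ← Function.comp_assoc, tmu_rho_cancel, Function.id_comp]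

lemma APm_of_InWfII (hl : 1 ≤ l) {w : Fhat l → Fhat l} (h : InWfII l w) : APm l w := by
  induction h with
  | one => exact APm.id
  | step i hi w hw ih =>
    refine APm.comp ?_ ih
    rcases Nat.eq_zero_or_pos i with rfl | h1
    · exact APm_sref_zero hl
    · rw [simpleRoot_mid h1 hi]; exact APm_sref_mid h1 hi

-- preservation of the lattices by generators
lemma exists_int_if (c : Prop) [Decidable c] : ∃ m : ℤ, (if c then (1:ℝ) else 0) = m :=
  ⟨if c then 1 else 0, by split_ifs <;> simp⟩

lemma MI_preserved {i : ℕ} (h1 : 1 ≤ i) (h2 : i ≤ l) {μ : Fhat l} (hμ : μ ∈ MI l) :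
    sref (simpleRoot l i) μ ∈ MI l := by
  obtain ⟨hx, h21, h22⟩ := hμ
  rcases eq_or_lt_of_le h2 with rfl | hlt
  · rw [simpleRoot_last (by omega), sref_eps_apply h1 h2]
    obtain ⟨mK, hmK⟩ := hx ⟨i-1, by omega⟩
    refine ⟨fun j => ?_, by simp [h21, eps_snd_fst], by simp [h22, eps_snd_snd]⟩
    obtain ⟨mj, hmj⟩ := hx j
    refine ⟨mj - 2 * mK * (if (j:ℕ) = i - 1 then 1 else 0), ?_⟩
    simp only [Prod.fst_sub, Prod.smul_fst, Pi.sub_apply, Pi.smul_apply, smul_eq_mul,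
      eps_fst, hmj, hmK]
    split_ifs <;> push_cast <;> ring
  · rw [simpleRoot_mid h1 hlt, sref_mid_apply h1 hlt]
    obtain ⟨mK, hmK⟩ := hx ⟨i-1, by omega⟩
    obtain ⟨mK', hmK'⟩ := hx ⟨i, by omega⟩
    refine ⟨fun j => ?_, by simp [h21, eps_snd_fst], by simp [h22, eps_snd_snd]⟩
    obtain ⟨mj, hmj⟩ := hx j
    refine ⟨mj - (mK - mK') * ((if (j:ℕ) = i - 1 then 1 else 0)
      - (if (j:ℕ) = i then 1 else 0)), ?_⟩
    simp only [Prod.fst_sub, Prod.smul_fst, Pi.sub_apply, Pi.smul_apply, smul_eq_mul,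
      eps_fst, Nat.add_sub_cancel, hmj, hmK, hmK']
    split_ifs <;> push_cast <;> ring

lemma MII_preserved (hl : 1 ≤ l) {i : ℕ} (hi : i < l) {μ : Fhat l} (hμ : μ ∈ MII l) :
    sref (simpleRoot l i) μ ∈ MII l := by
  obtain ⟨hx, h21, h22⟩ := hμ
  rcases Nat.eq_zero_or_pos i with rfl | h1
  · rw [simpleRoot_zero, sref_dme_apply le_rfl hl h22]
    obtain ⟨mK, hmK⟩ := hx ⟨0, by omega⟩
    have hsum : ∑ j, (μ + μ.1 ⟨1-1, by omega⟩ • (deltaV l - (2:ℝ) • eps l 1)).1 j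
        = (∑ j, μ.1 j) - 2 * μ.1 ⟨0, by omega⟩ := by
      simp only [Prod.fst_add, Prod.smul_fst, Pi.add_apply, Pi.smul_apply, smul_eq_mul,
        Prod.fst_sub, Pi.sub_apply, deltaV_fst, Finset.sum_add_distrib, ← Finset.mul_sum,
        Finset.sum_sub_distrib]
      rw [sum_eps le_rfl hl]
      simp only [Finset.sum_const_zero, mul_zero, add_zero]
      ring
    refine ⟨fun j => ?_, ?_, by simp [h22, eps_snd_snd, deltaV]⟩
    · obtain ⟨mj, hmj⟩ := hx j
      refine ⟨mj + mK * (0 - 2 * (if (j:ℕ) = 0 then 1 else 0)), ?_⟩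
      simp only [Prod.fst_add, Prod.smul_fst, Pi.add_apply, Pi.smul_apply, smul_eq_mul,
        Prod.fst_sub, Pi.sub_apply, deltaV_fst, eps_fst, hmj, hmK]
      split_ifs <;> push_cast <;> ring
    · rw [hsum]
      have : (μ + μ.1 ⟨1-1, by omega⟩ • (deltaV l - (2:ℝ) • eps l 1)).2.1
          = μ.2.1 + μ.1 ⟨0, by omega⟩ := by
        simp [deltaV, eps_snd_fst]
      rw [this, h21]
      ring
  · rw [simpleRoot_mid h1 hi, sref_mid_apply h1 hi]
    obtain ⟨mK, hmK⟩ := hx ⟨i-1, by omega⟩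
    obtain ⟨mK', hmK'⟩ := hx ⟨i, by omega⟩
    have hsum : ∑ j, (μ - (μ.1 ⟨i-1, by omega⟩ - μ.1 ⟨i, by omega⟩)
          • (eps l i - eps l (i+1))).1 j = ∑ j, μ.1 j := by
      simp only [Prod.fst_sub, Pi.sub_apply, Prod.smul_fst, Pi.smul_apply, smul_eq_mul,
        Finset.sum_sub_distrib, ← Finset.mul_sum]
      rw [sum_eps h1 (by omega), sum_eps (by omega) hi]
      ring
    refine ⟨fun j => ?_, ?_, by simp [h22, eps_snd_snd]⟩
    · obtain ⟨mj, hmj⟩ := hx j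
      refine ⟨mj - (mK - mK') * ((if (j:ℕ) = i - 1 then 1 else 0)
        - (if (j:ℕ) = i then 1 else 0)), ?_⟩
      simp only [Prod.fst_sub, Prod.smul_fst, Pi.sub_apply, Pi.smul_apply, smul_eq_mul,
        eps_fst, Nat.add_sub_cancel, hmj, hmK, hmK']
      split_ifs <;> push_cast <;> ring
    · rw [hsum]
      have : (μ - (μ.1 ⟨i-1, by omega⟩ - μ.1 ⟨i, by omega⟩)
          • (eps l i - eps l (i+1))).2.1 = μ.2.1 := by
        simp [eps_snd_fst]
      rw [this, h21]

lemma L_preserved (hl : 1 ≤ l) {i : ℕ} (hi : i ≤ l) {μ : Fhat l}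
    (hx : ∀ j, ∃ m : ℤ, μ.1 j = m) (hγ : μ.2.2 = 0) :
    (∀ j, ∃ m : ℤ, (sref (simpleRoot l i) μ).1 j = m)
      ∧ (sref (simpleRoot l i) μ).2.2 = 0 := by
  rcases Nat.eq_zero_or_pos i with rfl | h1
  · rw [simpleRoot_zero, sref_dme_apply le_rfl hl hγ]
    obtain ⟨mK, hmK⟩ := hx ⟨0, by omega⟩
    constructor
    · intro j
      obtain ⟨mj, hmj⟩ := hx j
      refine ⟨mj + mK * (0 - 2 * (if (j:ℕ) = 0 then 1 else 0)), ?_⟩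
      simp only [Prod.fst_add, Prod.smul_fst, Pi.add_apply, Pi.smul_apply, smul_eq_mul,
        Prod.fst_sub, Pi.sub_apply, deltaV_fst, eps_fst, hmj, hmK]
      split_ifs <;> push_cast <;> ring
    · simp [hγ, eps_snd_snd, deltaV]
  rcases eq_or_lt_of_le hi with rfl | hlt
  · rw [simpleRoot_last (by omega), sref_eps_apply h1 hi]
    obtain ⟨mK, hmK⟩ := hx ⟨i-1, by omega⟩
    constructor
    · intro j
      obtain ⟨mj, hmj⟩ := hx j
      refine ⟨mj - 2 * mK * (if (j:ℕ) = i - 1 then 1 else 0), ?_⟩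
      simp only [Prod.fst_sub, Prod.smul_fst, Pi.sub_apply, Pi.smul_apply, smul_eq_mul,
        eps_fst, hmj, hmK]
      split_ifs <;> push_cast <;> ring
    · simp [hγ, eps_snd_snd]
  · rw [simpleRoot_mid h1 hlt, sref_mid_apply h1 hlt]
    obtain ⟨mK, hmK⟩ := hx ⟨i-1, by omega⟩
    obtain ⟨mK', hmK'⟩ := hx ⟨i, by omega⟩
    constructor
    · intro j
      obtain ⟨mj, hmj⟩ := hx j
      refine ⟨mj - (mK - mK') * ((if (j:ℕ) = i - 1 then 1 else 0)
        - (if (j:ℕ) = i then 1 else 0)), ?_⟩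
      simp only [Prod.fst_sub, Prod.smul_fst, Pi.sub_apply, Pi.smul_apply, smul_eq_mul,
        eps_fst, Nat.add_sub_cancel, hmj, hmK, hmK']
      split_ifs <;> push_cast <;> ring
    · simp [hγ, eps_snd_snd]

lemma tmu_comm_sref {β : Fhat l} (hβ : Ihat β β ≠ 0) (hβ2 : β.2.2 = 0) (ν : Fhat l) :
    tmu ν ∘ sref β = sref β ∘ tmu (sref β ν) := by
  have h := (GoodW.ofSref hβ hβ2).tmu_conj (sref β ν)
  rw [show sref β (sref β ν) = ν from sref_sref hβ ν] at h
  exact h.symm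

lemma pushI (hl : 1 ≤ l) {u : Fhat l → Fhat l} (h : InWfI l u) :
    ∀ ν ∈ MI l, ∃ ν' ∈ MI l, tmu ν ∘ u = u ∘ tmu ν' := by
  induction h with
  | one => intro ν hν; exact ⟨ν, hν, by rw [Function.comp_id, Function.id_comp]⟩
  | step i hi hi' w hw ih =>
    intro ν hν
    have hs := tmu_comm_sref (simpleRoot_norm_ne hl hi') (simpleRoot_snd_snd i) ν
    obtain ⟨ν', hν', hcomm⟩ := ih (sref (simpleRoot l i) ν) (MI_preserved hi hi' hν)
    refine ⟨ν', hν', ?_⟩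
    rw [← Function.comp_assoc, hs, Function.comp_assoc, hcomm, ← Function.comp_assoc]

lemma pushII (hl : 1 ≤ l) {u : Fhat l → Fhat l} (h : InWfII l u) :
    ∀ ν ∈ MII l, ∃ ν' ∈ MII l, tmu ν ∘ u = u ∘ tmu ν' := by
  induction h with
  | one => intro ν hν; exact ⟨ν, hν, by rw [Function.comp_id, Function.id_comp]⟩
  | step i hi w hw ih =>
    intro ν hν
    have hs := tmu_comm_sref (simpleRoot_norm_ne hl (by omega)) (simpleRoot_snd_snd i) ν
    obtain ⟨ν', hν', hcomm⟩ := ih (sref (simpleRoot l i) ν) (MII_preserved hl hi hν)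
    refine ⟨ν', hν', ?_⟩
    rw [← Function.comp_assoc, hs, Function.comp_assoc, hcomm, ← Function.comp_assoc]

lemma normal_L (hl : 1 ≤ l) {w : Fhat l → Fhat l} (h : InW l w) :
    ∀ μ : Fhat l, (∀ j, ∃ m : ℤ, μ.1 j = m) → μ.2.2 = 0 →
      ∃ μ' : Fhat l, (∀ j, ∃ m : ℤ, μ'.1 j = m) ∧ μ'.2.2 = 0 ∧
        w ∘ tmu μ = tmu μ' ∘ w := by
  induction h with
  | one =>
    intro μ hx hγ
    exact ⟨μ, hx, hγ, by rw [Function.comp_id, Function.id_comp]⟩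
  | step i hi w hw ih =>
    intro μ hx hγ
    obtain ⟨μ', h1, h2, hc⟩ := ih μ hx hγ
    obtain ⟨h1', h2'⟩ := L_preserved hl hi h1 h2
    refine ⟨sref (simpleRoot l i) μ', h1', h2', ?_⟩
    have hconj := (GoodW.simpleRoot hl hi).tmu_conj μ'
    rw [Function.comp_assoc, hc, ← Function.comp_assoc, hconj, Function.comp_assoc]

lemma MI_zero : (0 : Fhat l) ∈ MI l := ⟨fun j => ⟨0, by simp⟩, rfl, rfl⟩

lemma MI_add {μ ν : Fhat l} (hμ : μ ∈ MI l) (hν : ν ∈ MI l) : μ + ν ∈ MI l := by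
  refine ⟨fun j => ?_, ?_, ?_⟩
  · obtain ⟨a, ha⟩ := hμ.1 j; obtain ⟨b, hb⟩ := hν.1 j
    exact ⟨a + b, by simp [Prod.fst_add, ha, hb]⟩
  · simp [Prod.snd_add, hμ.2.1, hν.2.1]
  · simp [Prod.snd_add, hμ.2.2, hν.2.2]

lemma MI_eps {k : ℕ} (h1 : 1 ≤ k) (h2 : k ≤ l) : eps l k ∈ MI l :=
  ⟨fun j => by rw [eps_fst]; exact exists_int_if _, rfl, rfl⟩

lemma MI_neg {μ : Fhat l} (hμ : μ ∈ MI l) : -μ ∈ MI l := by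
  refine ⟨fun j => ?_, by simp [hμ.2.1], by simp [hμ.2.2]⟩
  obtain ⟨a, ha⟩ := hμ.1 j
  exact ⟨-a, by simp [ha]⟩

lemma MII_add {μ ν : Fhat l} (hμ : μ ∈ MII l) (hν : ν ∈ MII l) : μ + ν ∈ MII l := by
  refine ⟨fun j => ?_, ?_, ?_⟩
  · obtain ⟨a, ha⟩ := hμ.1 j; obtain ⟨b, hb⟩ := hν.1 j
    exact ⟨a + b, by simp [Prod.fst_add, ha, hb]⟩
  · have hsum : ∑ j, (μ + ν).1 j = (∑ j, μ.1 j) + ∑ j, ν.1 j := by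
      simp [Prod.fst_add, Finset.sum_add_distrib]
    show μ.2.1 + ν.2.1 = -(∑ j, (μ + ν).1 j) / 2
    rw [hμ.2.1, hν.2.1, hsum]
    ring
  · simp [Prod.snd_add, hμ.2.2, hν.2.2]

lemma existI (hl : 1 ≤ l) {w : Fhat l → Fhat l} (h : InW l w) :
    ∃ p : (Fhat l → Fhat l) × Fhat l, InWfI l p.1 ∧ p.2 ∈ MI l ∧ w = p.1 ∘ tmu p.2 := by
  induction h with
  | one => exact ⟨(id, 0), .one, MI_zero, by rw [tmu_zero, Function.comp_id]⟩
  | step i hi w hw ih =>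
    obtain ⟨⟨u, μ⟩, hu, hμ, rfl⟩ := ih
    rcases Nat.eq_zero_or_pos i with rfl | h1
    · have hid : sref (simpleRoot l 0) = sref (eps l 1) ∘ tmu (-eps l 1) := by
        have h' := tmu_comm_sref (eps_norm_ne le_rfl hl) rfl (eps l 1)
        rw [show sref (eps l 1) (eps l 1) = -eps l 1 from sref_eps_self le_rfl hl] at h'
        rw [simpleRoot_zero, key_id le_rfl hl, h']
      obtain ⟨ν', hν', hcomm⟩ := pushI hl hu (-eps l 1) (MI_neg (MI_eps le_rfl hl))
      refine ⟨(sref (eps l 1) ∘ u, ν' + μ), ?_, ?_, ?_⟩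
      · show InWfI l (sref (eps l 1) ∘ u)
        exact InWfI_comp (chainI' hl le_rfl hl) hu
      · exact MI_add hν' hμ
      show sref (simpleRoot l 0) ∘ (u ∘ tmu μ) = (sref (eps l 1) ∘ u) ∘ tmu (ν' + μ)
      rw [hid, Function.comp_assoc, ← Function.comp_assoc (tmu (-eps l 1)) u (tmu μ),
        hcomm, Function.comp_assoc, tmu_add hν'.2.2 hμ.2.2, ← Function.comp_assoc]
    · refine ⟨(sref (simpleRoot l i) ∘ u, μ), InWfI.step i h1 hi u hu, hμ, ?_⟩
      show sref (simpleRoot l i) ∘ (u ∘ tmu μ) = (sref (simpleRoot l i) ∘ u) ∘ tmu μ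
      rw [Function.comp_assoc]

lemma existII (hl : 1 ≤ l) {w : Fhat l → Fhat l} (h : InW l w) :
    ∃ p : (Fhat l → Fhat l) × Fhat l, InWfII l p.1 ∧ p.2 ∈ MII l ∧ w = p.1 ∘ tmu p.2 := by
  induction h with
  | one =>
    refine ⟨(id, 0), .one, ⟨fun j => ⟨0, by simp⟩, by simp, rfl⟩,
      by rw [tmu_zero, Function.comp_id]⟩
  | step i hi w hw ih =>
    obtain ⟨⟨u, μ⟩, hu, hμ, rfl⟩ := ih
    rcases eq_or_lt_of_le hi with heq | hlt
    · -- i = l : use s_{ε_l} = s_{δ-2ε_l} ∘ t_{ε_l - δ}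
      have h1i : 1 ≤ i := by omega
      have hsr : simpleRoot l i = eps l i := by rw [heq]; exact simpleRoot_last hl
      set μ₀ : Fhat l := eps l i - (1/2 : ℝ) • deltaV l with hμ₀
      have hμ₀M : μ₀ ∈ MII l := by
        refine ⟨fun j => ?_, ?_, by simp [hμ₀, eps_snd_snd, deltaV]⟩
        · refine ⟨if (j:ℕ) = i - 1 then 1 else 0, ?_⟩
          simp only [hμ₀, Prod.fst_sub, Prod.smul_fst, Pi.sub_apply, Pi.smul_apply,
            smul_eq_mul, deltaV_fst, eps_fst]
          split_ifs <;> simp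
        · have hsum : ∑ j, μ₀.1 j = 1 := by
            simp only [hμ₀, Prod.fst_sub, Prod.smul_fst, Pi.sub_apply, Pi.smul_apply,
              smul_eq_mul, deltaV_fst, Finset.sum_sub_distrib]
            rw [sum_eps h1i hi]
            simp
          rw [hsum]
          simp [hμ₀, deltaV, eps_snd_fst]
          norm_num
      have hid : sref (simpleRoot l i) = sref (deltaV l - (2:ℝ) • eps l i) ∘ tmu μ₀ := by
        have h' := tmu_comm_sref (dme_norm_ne h1i hi) (by simp [deltaV, eps_snd_snd])
          (-eps l i)
        rw [sref_dme_negeps h1i hi] at h'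
        have hkey : sref (eps l i) = tmu (-eps l i) ∘ sref (deltaV l - (2:ℝ) • eps l i) := by
          rw [key_id h1i hi, ← Function.comp_assoc,
            tmu_add (by simp [eps_snd_snd]) (by simp [eps_snd_snd]), neg_add_cancel,
            tmu_zero, Function.id_comp]
        have hcongr : tmu (eps l i - deltaV l) = tmu μ₀ :=
          tmu_congr (by simp [hμ₀, deltaV]) (by simp [eps_snd_snd, deltaV])
            (by simp [hμ₀, eps_snd_snd, deltaV])
        rw [hsr, hkey, h', hcongr]
      obtain ⟨ν', hν', hcomm⟩ := pushII hl hu μ₀ hμ₀M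
      refine ⟨(sref (deltaV l - (2:ℝ) • eps l i) ∘ u, ν' + μ), ?_, ?_, ?_⟩
      · show InWfII l (sref (deltaV l - (2:ℝ) • eps l i) ∘ u)
        exact InWfII_comp (chainII hl i h1i hi) hu
      · exact MII_add hν' hμ
      show sref (simpleRoot l i) ∘ (u ∘ tmu μ)
          = (sref (deltaV l - (2:ℝ) • eps l i) ∘ u) ∘ tmu (ν' + μ)
      rw [hid, Function.comp_assoc, ← Function.comp_assoc (tmu μ₀) u (tmu μ),
        hcomm, Function.comp_assoc, tmu_add hν'.2.2 hμ.2.2, ← Function.comp_assoc]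
    · refine ⟨(sref (simpleRoot l i) ∘ u, μ), InWfII.step i hlt u hu, hμ, ?_⟩
      show sref (simpleRoot l i) ∘ (u ∘ tmu μ) = (sref (simpleRoot l i) ∘ u) ∘ tmu μ
      rw [Function.comp_assoc]

lemma neg_snd_snd {μ : Fhat l} (h : μ.2.2 = 0) : (-μ).2.2 = 0 := by simp [h]

lemma tmu_point_cancel {μ : Fhat l} (hμ : μ.2.2 = 0) (x : Fhat l) :
    tmu μ (tmu (-μ) x) = x := by
  have : tmu μ ∘ tmu (-μ) = id := by
    rw [tmu_add hμ (neg_snd_snd hμ), add_neg_cancel, tmu_zero]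
  exact congrFun this x

lemma tmu_cancel_right {μ : Fhat l} (hμ : μ.2.2 = 0) {f g : Fhat l → Fhat l}
    (h : f ∘ tmu μ = g ∘ tmu μ) : f = g := by
  funext x
  calc f x = f (tmu μ (tmu (-μ) x)) := by rw [tmu_point_cancel hμ]
    _ = g (tmu μ (tmu (-μ) x)) := congrFun h (tmu (-μ) x)
    _ = g x := by rw [tmu_point_cancel hμ]

lemma tmu_cancel_left {μ : Fhat l} (hμ : μ.2.2 = 0) {f g : Fhat l → Fhat l}
    (h : tmu μ ∘ f = tmu μ ∘ g) : f = g := by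
  funext x
  have h1 : tmu (-μ) (tmu μ (f x)) = tmu (-μ) (tmu μ (g x)) := by
    rw [show tmu μ (f x) = (tmu μ ∘ f) x from rfl, h]; rfl
  have hcan : ∀ y : Fhat l, tmu (-μ) (tmu μ y) = y := by
    intro y
    have : tmu (-μ) ∘ tmu μ = id := by
      rw [tmu_add (neg_snd_snd hμ) hμ, neg_add_cancel, tmu_zero]
    exact congrFun this y
  rw [hcan, hcan] at h1
  exact h1

lemma gammaV_fst (j : Fin l) : (gammaV l).1 j = 0 := rfl

lemma SP_eq_tmu {g : Fhat l → Fhat l} {ν : Fhat l} (hg : SPm l g) (h : g = tmu ν) :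
    ν.1 = 0 := by
  obtain ⟨σ, e, he, hgf⟩ := hg
  have h1 : (g (gammaV l)).1 = (tmu ν (gammaV l)).1 := by rw [h]
  rw [hgf, tmu_fst] at h1
  funext j
  have := congrFun h1 j
  simp only [gammaV, Pi.add_apply, Pi.smul_apply] at this
  simpa using this.symm

lemma SP_pair_fst {v₁ v₂ : Fhat l → Fhat l} {ν₁ ν₂ : Fhat l} (h₁ : SPm l v₁) (h₂ : SPm l v₂)
    (hγ₁ : ν₁.2.2 = 0) (hγ₂ : ν₂.2.2 = 0) (h : v₁ ∘ tmu ν₁ = v₂ ∘ tmu ν₂) :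
    ν₁.1 = ν₂.1 := by
  obtain ⟨v₂', hv₂', hinv, hinv'⟩ := SPm.inv h₂
  have hg : (v₂' ∘ v₁) ∘ tmu ν₁ = tmu ν₂ := by
    rw [Function.comp_assoc, h, ← Function.comp_assoc, hinv, Function.id_comp]
  have hg2 : (v₂' ∘ v₁) ∘ tmu ν₁ = (tmu (ν₂ + -ν₁)) ∘ tmu ν₁ := by
    rw [hg, tmu_add (by simp [hγ₁, hγ₂] : ((ν₂ + -ν₁ : Fhat l)).2.2 = 0) hγ₁,
      show ν₂ + -ν₁ + ν₁ = ν₂ from by module]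
  have hgeq : v₂' ∘ v₁ = tmu (ν₂ + -ν₁) := tmu_cancel_right hγ₁ hg2
  have h0 : (ν₂ + -ν₁).1 = 0 := SP_eq_tmu (SPm.comp hv₂' h₁) hgeq
  funext j
  have := congrFun h0 j
  simp only [Prod.fst_add, Prod.fst_neg, Pi.add_apply, Pi.neg_apply, Pi.zero_apply] at this
  linarith

lemma uniqI (hl : 1 ≤ l) {u₁ u₂ : Fhat l → Fhat l} {μ₁ μ₂ : Fhat l}
    (h₁ : InWfI l u₁) (h₂ : InWfI l u₂) (hμ₁ : μ₁ ∈ MI l) (hμ₂ : μ₂ ∈ MI l)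
    (h : u₁ ∘ tmu μ₁ = u₂ ∘ tmu μ₂) : u₁ = u₂ ∧ μ₁ = μ₂ := by
  have hfst : μ₁.1 = μ₂.1 :=
    SP_pair_fst (SPm_of_InWfI h₁) (SPm_of_InWfI h₂) hμ₁.2.2 hμ₂.2.2 h
  have hμeq : μ₁ = μ₂ := Fhat_ext hfst (by rw [hμ₁.2.1, hμ₂.2.1]) (by rw [hμ₁.2.2, hμ₂.2.2])
  subst hμeq
  exact ⟨tmu_cancel_right hμ₁.2.2 h, rfl⟩

lemma uniqII (hl : 1 ≤ l) {u₁ u₂ : Fhat l → Fhat l} {μ₁ μ₂ : Fhat l}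
    (h₁ : InWfII l u₁) (h₂ : InWfII l u₂) (hμ₁ : μ₁ ∈ MII l) (hμ₂ : μ₂ ∈ MII l)
    (h : u₁ ∘ tmu μ₁ = u₂ ∘ tmu μ₂) : u₁ = u₂ ∧ μ₁ = μ₂ := by
  obtain ⟨v₁, hv₁, rfl⟩ := APm_of_InWfII hl h₁
  obtain ⟨v₂, hv₂, rfl⟩ := APm_of_InWfII hl h₂
  have hmid : tmu (rhoV l) ∘ (v₁ ∘ tmu (-rhoV l + μ₁))
      = tmu (rhoV l) ∘ (v₂ ∘ tmu (-rhoV l + μ₂)) := by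
    rw [← tmu_add neg_rho_snd hμ₁.2.2, ← tmu_add neg_rho_snd hμ₂.2.2]
    rw [show tmu (rhoV l) ∘ (v₁ ∘ (tmu (-rhoV l) ∘ tmu μ₁))
        = (tmu (rhoV l) ∘ v₁ ∘ tmu (-rhoV l)) ∘ tmu μ₁ by
      rw [Function.comp_assoc, Function.comp_assoc]]
    rw [show tmu (rhoV l) ∘ (v₂ ∘ (tmu (-rhoV l) ∘ tmu μ₂))
        = (tmu (rhoV l) ∘ v₂ ∘ tmu (-rhoV l)) ∘ tmu μ₂ by
      rw [Function.comp_assoc, Function.comp_assoc]]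
    exact h
  have hmain : v₁ ∘ tmu (-rhoV l + μ₁) = v₂ ∘ tmu (-rhoV l + μ₂) :=
    tmu_cancel_left rfl hmid
  have hfst : (-rhoV l + μ₁).1 = (-rhoV l + μ₂).1 :=
    SP_pair_fst hv₁ hv₂ (by simp [hμ₁.2.2, rhoV]) (by simp [hμ₂.2.2, rhoV]) hmain
  have hfst' : μ₁.1 = μ₂.1 := by
    funext j
    have := congrFun hfst j
    simp only [Prod.fst_add, Prod.fst_neg, Pi.add_apply, Pi.neg_apply] at this
    linarith
  have hμeq : μ₁ = μ₂ := by
    refine Fhat_ext hfst' ?_ (by rw [hμ₁.2.2, hμ₂.2.2])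
    rw [hμ₁.2.1, hμ₂.2.1, hfst']
  subst hμeq
  have := tmu_cancel_right (μ := -rhoV l + μ₁) (by simp [hμ₁.2.2, rhoV]) hmain
  rw [this]
  exact ⟨rfl, rfl⟩
/-- semidirect product descriptions `W = W_f^{(♯)} ⋉ t(M^{(♯)})` for
`♯ ∈ {I, II}`: `t(M^{(♯)})` is an abelian normal subgroup of `W`, and every `w ∈ W`
is uniquely `u ∘ t_μ` with `u ∈ W_f^{(♯)}`, `μ ∈ M^{(♯)}`. -/
theorem stmt4 (l : ℕ) (hl : 1 ≤ l) :
    -- Type I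
    ((∀ μ ∈ MI l, InW l (tmu μ)) ∧
     (∀ μ₁ ∈ MI l, ∀ μ₂ ∈ MI l, tmu μ₁ ∘ tmu μ₂ = tmu μ₂ ∘ tmu μ₁) ∧
     (∀ w, InW l w → ∀ μ ∈ MI l, ∃ μ' ∈ MI l, w ∘ tmu μ = tmu μ' ∘ w) ∧
     (∀ w, InW l w → ∃! p : (Fhat l → Fhat l) × Fhat l,
        InWfI l p.1 ∧ p.2 ∈ MI l ∧ w = p.1 ∘ tmu p.2)) ∧
    -- Type II
    ((∀ μ ∈ MII l, InW l (tmu μ)) ∧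
     (∀ μ₁ ∈ MII l, ∀ μ₂ ∈ MII l, tmu μ₁ ∘ tmu μ₂ = tmu μ₂ ∘ tmu μ₁) ∧
     (∀ w, InW l w → ∀ μ ∈ MII l, ∃ μ' ∈ MII l, w ∘ tmu μ = tmu μ' ∘ w) ∧
     (∀ w, InW l w → ∃! p : (Fhat l → Fhat l) × Fhat l,
        InWfII l p.1 ∧ p.2 ∈ MII l ∧ w = p.1 ∘ tmu p.2)) := by
  constructor
  · refine ⟨fun μ hμ => InW_tmu_MI hl hμ, fun μ₁ h₁ μ₂ h₂ => ?_, fun w hw μ hμ => ?_,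
      fun w hw => ?_⟩
    · rw [tmu_add h₁.2.2 h₂.2.2, tmu_add h₂.2.2 h₁.2.2, add_comm]
    · obtain ⟨μ', hx, hγ, hc⟩ := normal_L hl hw μ hμ.1 hμ.2.2
      refine ⟨((μ'.1, 0, 0) : Fhat l), ⟨hx, rfl, rfl⟩, ?_⟩
      rw [hc, show tmu μ' = tmu ((μ'.1, 0, 0) : Fhat l) from tmu_congr rfl hγ rfl]
    · obtain ⟨p, hp1, hp2, hp3⟩ := existI hl hw
      refine ⟨p, ⟨hp1, hp2, hp3⟩, ?_⟩
      rintro ⟨u, μ⟩ ⟨hq1, hq2, hq3⟩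
      obtain ⟨hueq, hμeq⟩ := uniqI hl hq1 hp1 hq2 hp2 (by rw [← hq3, ← hp3])
      exact Prod.ext hueq hμeq
  · refine ⟨fun μ hμ => InW_tmu_MII hl hμ, fun μ₁ h₁ μ₂ h₂ => ?_, fun w hw μ hμ => ?_,
      fun w hw => ?_⟩
    · rw [tmu_add h₁.2.2 h₂.2.2, tmu_add h₂.2.2 h₁.2.2, add_comm]
    · obtain ⟨μ', hx, hγ, hc⟩ := normal_L hl hw μ hμ.1 hμ.2.2
      refine ⟨((μ'.1, -(∑ j, μ'.1 j)/2, 0) : Fhat l), ⟨hx, rfl, rfl⟩, ?_⟩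
      rw [hc, show tmu μ' = tmu ((μ'.1, -(∑ j, μ'.1 j)/2, 0) : Fhat l) from
        tmu_congr rfl hγ rfl]
    · obtain ⟨p, hp1, hp2, hp3⟩ := existII hl hw
      refine ⟨p, ⟨hp1, hp2, hp3⟩, ?_⟩
      rintro ⟨u, μ⟩ ⟨hq1, hq2, hq3⟩
      obtain ⟨hueq, hμeq⟩ := uniqII hl hq1 hp1 hq2 hp2 (by rw [← hq3, ← hp3])
      exact Prod.ext hueq hμeq
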